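/- arXiv:1710.04042 — 2 statements merged into one kernel-verified Lean document; each statement's English description precedes it below -/
import Mathlib

section
/- Let A be a real symmetric n×n matrix and let P be a real density matrix. Then the set of real density matrices Q such that there is pretty good state transfer from P to Q is finite. -/
open Matrix
open scoped ComplexOrder

/-- The transition matrix `U(t) = exp(itA)`. -/
noncomputable def U {n : ℕ} (A : Matrix (Fin n) (Fin n) ℂ) (t : ℝ) :
    Matrix (Fin n) (Fin n) ℂ :=
  NormedSpace.exp (((t : ℂ) * Complex.I) • A)

/-- The Frobenius norm of a complex matrix. -/
noncomputable def fnorm {n : ℕ} (M : Matrix (Fin n) (Fin n) ℂ) : ℝ :=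
  Real.sqrt (∑ i, ∑ j, ‖M i j‖ ^ 2)

lemma abs_apply_le_fnorm {n : ℕ} (M : Matrix (Fin n) (Fin n) ℂ) (i j : Fin n) :
    ‖M i j‖ ≤ fnorm M := by
  rw [fnorm, ← Real.sqrt_sq (norm_nonneg (M i j))]
  apply Real.sqrt_le_sqrt
  calc ‖M i j‖ ^ 2 ≤ ∑ j', ‖M i j'‖ ^ 2 :=
        Finset.single_le_sum (f := fun j' => ‖M i j'‖ ^ 2)
          (fun _ _ => sq_nonneg _) (Finset.mem_univ j)
    _ ≤ ∑ i', ∑ j', ‖M i' j'‖ ^ 2 :=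
        Finset.single_le_sum (f := fun i' => ∑ j', ‖M i' j'‖ ^ 2)
          (fun _ _ => Finset.sum_nonneg fun _ _ => sq_nonneg _)
          (Finset.mem_univ i)

lemma fnorm_eq_trace {n : ℕ} (M : Matrix (Fin n) (Fin n) ℂ) :
    fnorm M = Real.sqrt ((Mᴴ * M).trace.re) := by
  rw [fnorm]
  congr 1
  rw [Finset.sum_comm]
  simp only [Matrix.trace, Matrix.diag, Complex.re_sum, Matrix.mul_apply,
    Matrix.conjTranspose_apply]
  apply Finset.sum_congr rfl; intro k _
  apply Finset.sum_congr rfl; intro i _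
  rw [Complex.sq_norm]
  simp only [Complex.normSq_apply, Complex.mul_re, RCLike.star_def, Complex.conj_re, Complex.conj_im]
  ring

lemma fnorm_unitary_conj {n : ℕ} {V : Matrix (Fin n) (Fin n) ℂ}
    (h1 : Vᴴ * V = 1) (N : Matrix (Fin n) (Fin n) ℂ) :
    fnorm (V * N * Vᴴ) = fnorm N := by
  have hct : (V * N * Vᴴ)ᴴ = V * Nᴴ * Vᴴ := by
    simp [Matrix.conjTranspose_mul, Matrix.mul_assoc]
  have e1 : V * Nᴴ * Vᴴ * (V * N * Vᴴ) = V * (Nᴴ * N) * Vᴴ := by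
    calc V * Nᴴ * Vᴴ * (V * N * Vᴴ) = V * Nᴴ * (Vᴴ * V) * N * Vᴴ := by
          simp only [Matrix.mul_assoc]
      _ = V * (Nᴴ * N) * Vᴴ := by rw [h1]; simp only [Matrix.mul_one, Matrix.mul_assoc]
  have e2 : ((V * N * Vᴴ)ᴴ * (V * N * Vᴴ)).trace = (Nᴴ * N).trace := by
    rw [hct, e1, Matrix.trace_mul_cycle, h1, Matrix.one_mul]
  rw [fnorm_eq_trace, fnorm_eq_trace, e2]

lemma key_entry {p q : ℂ} (hp : p.im = 0) (hq : q.im = 0)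
    (h : ∀ ε : ℝ, 0 < ε → ∃ u v : ℂ, ‖u‖ = 1 ∧ ‖v‖ = 1 ∧
      ‖u * p * v - q‖ < ε) :
    q = p ∨ q = -p := by
  have habs : ‖q‖ = ‖p‖ := by
    by_contra hne
    have hd : 0 < |‖p‖ - ‖q‖| :=
      abs_pos.2 (sub_ne_zero.2 fun hh => hne hh.symm)
    obtain ⟨u, v, hu, hv, hlt⟩ := h _ hd
    have hle : |‖u * p * v‖ - ‖q‖| ≤ ‖u * p * v - q‖ :=
      abs_norm_sub_norm_le _ _
    rw [norm_mul, norm_mul, hu, hv, one_mul, mul_one] at hle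
    exact absurd (lt_of_le_of_lt hle hlt) (lt_irrefl _)
  have hpe : p = (p.re : ℂ) := Complex.ext rfl (by simp [hp])
  have hqe : q = (q.re : ℂ) := Complex.ext rfl (by simp [hq])
  rw [hpe, hqe, Complex.norm_real, Complex.norm_real, Real.norm_eq_abs, Real.norm_eq_abs] at habs
  rcases abs_eq_abs.1 habs with h1 | h1
  · left; rw [hqe, hpe, h1]
  · right; rw [hqe, hpe, h1]; push_cast; ring

lemma real_mul3 {n : ℕ} {M N R : Matrix (Fin n) (Fin n) ℂ}
    (hM : ∀ i j, (M i j).im = 0) (hN : ∀ i j, (N i j).im = 0)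
    (hR : ∀ i j, (R i j).im = 0) (i j : Fin n) : ((M * N * R) i j).im = 0 := by
  have hMN : ∀ a b, ((M * N) a b).im = 0 := by
    intro a b
    rw [Matrix.mul_apply, Complex.im_sum]
    exact Finset.sum_eq_zero fun c _ => by rw [Complex.mul_im, hM, hN, mul_zero, zero_mul, add_zero]
  rw [Matrix.mul_apply, Complex.im_sum]
  exact Finset.sum_eq_zero fun c _ => by rw [Complex.mul_im, hMN, hR, mul_zero, zero_mul, add_zero]

/-- If `A` is real symmetric and `P` is a real density matrix, then
the set of real density matrices `Q` admitting pretty good state transfer from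
`P` is finite. -/
theorem stmt_6 {n : ℕ} (hn : 1 ≤ n)
    (A : Matrix (Fin n) (Fin n) ℂ)
    (hAreal : ∀ i j, (A i j).im = 0) (hAsym : Aᵀ = A)
    (P : Matrix (Fin n) (Fin n) ℂ)
    (hP : P.PosSemidef) (hPtr : P.trace = 1)
    (hPreal : ∀ i j, (P i j).im = 0) :
    {Q : Matrix (Fin n) (Fin n) ℂ |
        Q.PosSemidef ∧ Q.trace = 1 ∧ (∀ i j, (Q i j).im = 0) ∧
        ∀ ε : ℝ, 0 < ε → ∃ t : ℝ, fnorm (U A t * P * U A (-t) - Q) < ε}.Finite := by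
  classical
  set B : Matrix (Fin n) (Fin n) ℝ := Matrix.of (fun i j => (A i j).re) with hBdef
  have hB : B.IsHermitian := by
    ext i j
    have := congrFun (congrFun hAsym i) j
    simpa [Matrix.conjTranspose_apply, hBdef] using congrArg Complex.re this
  set θ : Fin n → ℝ := hB.eigenvalues with hθdef
  set V0 : Matrix (Fin n) (Fin n) ℝ := (hB.eigenvectorUnitary : Matrix (Fin n) (Fin n) ℝ)
    with hV0def
  have hspec : B = V0 * Matrix.diagonal θ * star V0 := by
    have := hB.spectral_theorem
    simpa [RCLike.ofReal_real_eq_id] using this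
  have hV0u : V0 * star V0 = 1 := Matrix.mem_unitaryGroup_iff.mp hB.eigenvectorUnitary.2
  have hV0u' : star V0 * V0 = 1 := Matrix.mem_unitaryGroup_iff'.mp hB.eigenvectorUnitary.2
  set φ := (Complex.ofRealHom.mapMatrix : Matrix (Fin n) (Fin n) ℝ →+* Matrix (Fin n) (Fin n) ℂ)
    with hφdef
  have hφapp : ∀ (M : Matrix (Fin n) (Fin n) ℝ) i j, φ M i j = (M i j : ℂ) := by
    intro M i j; simp [hφdef]
  set V : Matrix (Fin n) (Fin n) ℂ := φ V0 with hVdef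
  have hVH : Vᴴ = φ (star V0) := by
    ext i j
    simp [Matrix.conjTranspose_apply, hφapp, Complex.conj_ofReal, hVdef, Matrix.star_apply]
  have hVV : V * Vᴴ = 1 := by rw [hVH, hVdef, ← _root_.map_mul, hV0u, _root_.map_one]
  have hV'V : Vᴴ * V = 1 := by rw [hVH, hVdef, ← _root_.map_mul, hV0u', _root_.map_one]
  have hVreal : ∀ i j, (V i j).im = 0 := by intro i j; simp [hVdef, hφapp]
  have hVHreal : ∀ i j, (Vᴴ i j).im = 0 := by
    intro i j
    rw [Matrix.conjTranspose_apply, Complex.star_def, Complex.conj_im, hVreal j i, neg_zero]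
  have hAeq : A = φ B := by
    ext i j
    refine Complex.ext ?_ ?_
    · simp [hφapp, hBdef]
    · simp [hφapp, hBdef, hAreal i j]
  have hAspec : A = V * Matrix.diagonal (fun k => (θ k : ℂ)) * Vᴴ := by
    rw [hAeq, hspec, _root_.map_mul, _root_.map_mul, hVH, hVdef]
    congr 1
    congr 1
    ext i j
    rcases eq_or_ne i j with rfl | hij
    · simp [hφapp]
    · simp [hφapp, Matrix.diagonal_apply_ne _ hij]
  set E : ℝ → Matrix (Fin n) (Fin n) ℂ :=
    fun t => Matrix.diagonal (fun k => Complex.exp ((t : ℂ) * Complex.I * (θ k : ℂ))) with hEdef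
  have hU : ∀ t : ℝ, U A t = V * E t * Vᴴ := by
    intro t
    rw [U, hAspec]
    have hsm : ((t : ℂ) * Complex.I) • (V * Matrix.diagonal (fun k => (θ k : ℂ)) * Vᴴ)
        = V * (Matrix.diagonal (fun k => ((t : ℂ) * Complex.I) * (θ k : ℂ))) * Vᴴ := by
      rw [← Matrix.smul_mul, ← Matrix.mul_smul, ← Matrix.diagonal_smul]
      have harg : ((↑t * Complex.I : ℂ) • fun k => ((θ k : ℂ)))
          = fun k => (↑t * Complex.I : ℂ) * ↑(θ k) := by
        funext k; simp [smul_eq_mul]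
      rw [harg]
    rw [hsm]
    set W : (Matrix (Fin n) (Fin n) ℂ)ˣ := ⟨V, Vᴴ, hVV, hV'V⟩ with hWdef
    have hconj := Matrix.exp_units_conj W
      (Matrix.diagonal (fun k => ((t : ℂ) * Complex.I) * (θ k : ℂ)))
    have hWinv : (↑W⁻¹ : Matrix (Fin n) (Fin n) ℂ) = Vᴴ := rfl
    have hWc : (↑W : Matrix (Fin n) (Fin n) ℂ) = V := rfl
    rw [hWinv, hWc] at hconj
    rw [hconj]
    have hd : NormedSpace.exp (Matrix.diagonal fun k => ((t : ℂ) * Complex.I) * (θ k : ℂ))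
        = E t := by
      rw [Matrix.exp_diagonal, hEdef]
      funext i j
      rcases eq_or_ne i j with rfl | hij
      · simp only [Matrix.diagonal_apply_eq]
        rw [Complex.exp_eq_exp_ℂ]
        exact Pi.coe_exp _ i
      · simp [Matrix.diagonal_apply_ne _ hij]
    rw [hd]
  clear_value θ V0 V
  clear hθdef hV0def hVdef hVH hV0u hV0u' hspec hAeq hAspec hBdef hB hφapp hφdef
  set P' : Matrix (Fin n) (Fin n) ℂ := Vᴴ * P * V with hP'def
  -- the finite target set
  set g : (Fin n → Fin n → Bool) → Matrix (Fin n) (Fin n) ℂ :=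
    fun b => Matrix.of (fun j k => if b j k then P' j k else -P' j k) with hgdef
  have himfin : (Set.range fun b => V * g b * Vᴴ).Finite := Set.finite_range _
  apply Set.Finite.subset himfin
  rintro Q ⟨-, -, hQreal, hQpg⟩
  set Q' : Matrix (Fin n) (Fin n) ℂ := Vᴴ * Q * V with hQ'def
  have hQback : V * Q' * Vᴴ = Q := by
    have : V * (Vᴴ * Q * V) * Vᴴ = (V * Vᴴ) * Q * (V * Vᴴ) := by
      simp only [Matrix.mul_assoc]
    rw [hQ'def, this, hVV, Matrix.one_mul, Matrix.mul_one]
  -- entrywise condition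
  have hent : ∀ j k, Q' j k = P' j k ∨ Q' j k = -P' j k := by
    intro j k
    apply key_entry (real_mul3 hVHreal hPreal hVreal j k) (real_mul3 hVHreal hQreal hVreal j k)
    intro ε hε
    obtain ⟨t, ht⟩ := hQpg ε hε
    refine ⟨Complex.exp ((t : ℂ) * Complex.I * (θ j : ℂ)),
      Complex.exp (((-t : ℝ) : ℂ) * Complex.I * (θ k : ℂ)), ?_, ?_, ?_⟩
    · rw [Complex.norm_exp]; norm_num [Complex.mul_re, Complex.mul_im]
    · rw [Complex.norm_exp]; norm_num [Complex.mul_re, Complex.mul_im]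
    · have hsand : U A t * P * U A (-t) - Q = V * (E t * P' * E (-t) - Q') * Vᴴ := by
        rw [hU, hU, Matrix.mul_sub, Matrix.sub_mul, hQback, hP'def]
        congr 1
        simp only [Matrix.mul_assoc]
      rw [hsand, fnorm_unitary_conj hV'V] at ht
      have h5 := lt_of_le_of_lt (abs_apply_le_fnorm (E t * P' * E (-t) - Q') j k) ht
      have h3 : (E t * P' * E (-t) - Q') j k
          = Complex.exp ((t : ℂ) * Complex.I * (θ j : ℂ)) * P' j k *
            Complex.exp (((-t : ℝ) : ℂ) * Complex.I * (θ k : ℂ)) - Q' j k := by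
        simp only [hEdef, Matrix.sub_apply, Matrix.mul_diagonal, Matrix.diagonal_mul]
      rw [h3] at h5
      exact h5
  refine ⟨fun j k => decide (Q' j k = P' j k), ?_⟩
  have hg : g (fun j k => decide (Q' j k = P' j k)) = Q' := by
    ext j k
    by_cases h : Q' j k = P' j k
    · simp only [hgdef, Matrix.of_apply]
      rw [if_pos (decide_eq_true h)]
      exact h.symm
    · have h2 := (hent j k).resolve_left h
      simp only [hgdef, Matrix.of_apply]
      rw [if_neg (by simpa using h)]
      exact h2.symm
  show V * g _ * Vᴴ = Q
  rw [hg]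
  exact hQback
end

section
/- Let A be a Hermitian n×n matrix and P a density matrix, and let S = {σ ∈ ℝ : U(σ)·P·U(−σ) = P}. Then S is an additive subgroup of ℝ; moreover, if S contains a strictly decreasing sequence of positive numbers tending to 0, then A·P = P·A and U(t)·P·U(−t) = P for all real t. -/
open Matrix
open scoped ComplexOrder

set_option maxHeartbeats 1600000

section Aux

variable {n : ℕ} (A : Matrix (Fin n) (Fin n) ℂ)

lemma U_zero : U A 0 = 1 := by
  simp [U, NormedSpace.exp_zero]

lemma U_add (s t : ℝ) : U A (s + t) = U A s * U A t := by
  unfold U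
  rw [show (((s + t : ℝ) : ℂ) * Complex.I) • A
      = ((s : ℂ) * Complex.I) • A + ((t : ℂ) * Complex.I) • A by
    push_cast; rw [← add_smul]; ring_nf]
  exact Matrix.exp_add_of_commute _ _ (by
    simp only [Commute, SemiconjBy, Matrix.smul_mul, Matrix.mul_smul]
    rw [smul_comm])

lemma U_mul_U_neg (t : ℝ) : U A t * U A (-t) = 1 := by
  rw [← U_add, add_neg_cancel, U_zero]

lemma U_neg_mul_U (t : ℝ) : U A (-t) * U A t = 1 := by
  rw [← U_add, neg_add_cancel, U_zero]

end Aux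

/-- For a Hermitian `A` and density matrix `P`, the set
`S = {σ : U(σ)·P·U(−σ) = P}` is an additive subgroup of `ℝ`; moreover, if `S`
contains a strictly decreasing sequence of positive reals tending to `0`, then
`A·P = P·A` and `U(t)·P·U(−t) = P` for all `t`. -/
theorem stmt_9 {n : ℕ} (hn : 1 ≤ n)
    (A : Matrix (Fin n) (Fin n) ℂ) (hA : A.IsHermitian)
    (P : Matrix (Fin n) (Fin n) ℂ)
    (hP : P.PosSemidef) (hPtr : P.trace = 1) :
    (∃ G : AddSubgroup ℝ,
        (G : Set ℝ) = {σ : ℝ | U A σ * P * U A (-σ) = P}) ∧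
    (∀ f : ℕ → ℝ, (∀ k, 0 < f k) → StrictAnti f →
        Filter.Tendsto f Filter.atTop (nhds 0) →
        (∀ k, U A (f k) * P * U A (-(f k)) = P) →
        A * P = P * A ∧ ∀ t : ℝ, U A t * P * U A (-t) = P) := by
  constructor
  · refine ⟨{ carrier := {σ : ℝ | U A σ * P * U A (-σ) = P}
              zero_mem' := by simp [U_zero]
              add_mem' := ?_
              neg_mem' := ?_ }, rfl⟩
    · intro a b ha hb
      simp only [Set.mem_setOf_eq] at ha hb ⊢
      rw [neg_add, show (-a) + (-b) = (-b) + (-a) by ring, U_add, U_add]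
      calc U A a * U A b * P * (U A (-b) * U A (-a))
          = U A a * (U A b * P * U A (-b)) * U A (-a) := by
            simp only [mul_assoc]
        _ = P := by rw [hb, ha]
    · intro a ha
      simp only [Set.mem_setOf_eq] at ha ⊢
      calc U A (-a) * P * U A (-(-a))
          = U A (-a) * (U A a * P * U A (-a)) * U A a := by rw [ha, neg_neg]
        _ = (U A (-a) * U A a) * P * (U A (-a) * U A a) := by
            simp only [mul_assoc]
        _ = P := by rw [U_neg_mul_U A a, one_mul, mul_one]
  · intro f hfpos hfanti hftend hfper
    letI : SeminormedRing (Matrix (Fin n) (Fin n) ℂ) := Matrix.linftyOpSemiNormedRing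
    letI : NormedRing (Matrix (Fin n) (Fin n) ℂ) := Matrix.linftyOpNormedRing
    letI : NormedAlgebra ℂ (Matrix (Fin n) (Fin n) ℂ) := Matrix.linftyOpNormedAlgebra
    -- the analytic function of a complex variable
    set B : Matrix (Fin n) (Fin n) ℂ := Complex.I • A with hB
    have hUt : ∀ t : ℝ, U A t = NormedSpace.exp ((t : ℂ) • B) := by
      intro t
      rw [U, hB, smul_smul]
    set g : ℂ → Matrix (Fin n) (Fin n) ℂ :=
      fun z => NormedSpace.exp (z • B) * P * NormedSpace.exp ((-z) • B) - P with hg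
    have hganal : AnalyticOnNhd ℂ g Set.univ := by
      intro z _
      have h1 : AnalyticAt ℂ (fun z : ℂ => NormedSpace.exp (z • B)) z :=
        (NormedSpace.exp_analytic _).comp ((analyticAt_id).smul analyticAt_const)
      have h2 : AnalyticAt ℂ (fun z : ℂ => NormedSpace.exp ((-z) • B)) z :=
        (NormedSpace.exp_analytic _).comp ((analyticAt_id.neg).smul analyticAt_const)
      exact ((h1.mul analyticAt_const).mul h2).sub analyticAt_const
    have hzero : ∀ z : ℂ, g z = 0 := by
      have hfreq : ∃ᶠ z in nhdsWithin (0 : ℂ) {(0 : ℂ)}ᶜ, g z = 0 := by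
        have htend : Filter.Tendsto (fun k => ((f k : ℝ) : ℂ)) Filter.atTop
            (nhdsWithin (0 : ℂ) {(0 : ℂ)}ᶜ) := by
          rw [tendsto_nhdsWithin_iff]
          constructor
          · exact (Complex.continuous_ofReal.tendsto 0).comp hftend
          · filter_upwards with k
            simp only [Set.mem_compl_iff, Set.mem_singleton_iff]
            exact_mod_cast (hfpos k).ne'
        refine htend.frequently (Filter.Eventually.frequently ?_)
        filter_upwards with k
        have := hfper k
        rw [hUt, hUt] at this
        simp only [hg]
        rw [show ((-(f k : ℝ) : ℝ) : ℂ) = -((f k : ℝ) : ℂ) by push_cast; ring] at this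
        rw [this]
        simp
      have := hganal.eqOn_zero_of_preconnected_of_frequently_eq_zero
        isPreconnected_univ (Set.mem_univ (0 : ℂ)) hfreq
      intro z
      exact this (Set.mem_univ z)
    have hall : ∀ t : ℝ, U A t * P * U A (-t) = P := by
      intro t
      have := hzero ((t : ℝ) : ℂ)
      rw [hg] at this
      simp only [sub_eq_zero] at this
      rw [hUt t, hUt (-t)]
      rw [show ((-t : ℝ) : ℂ) = -((t : ℝ) : ℂ) by push_cast; ring]
      exact this
    refine ⟨?_, hall⟩
    -- commute via derivative at 0
    have hcomm : ∀ z : ℂ, NormedSpace.exp (z • B) * P = P * NormedSpace.exp (z • B) := by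
      intro z
      have h0 := hzero z
      rw [hg, sub_eq_zero] at h0
      have hinv : NormedSpace.exp ((-z) • B) * NormedSpace.exp (z • B) = 1 := by
        rw [← Matrix.exp_add_of_commute _ _ (((Commute.refl B).smul_left (-z)).smul_right z)]
        rw [show (-z) • B + z • B = 0 by rw [← add_smul]; simp]
        exact NormedSpace.exp_zero
      calc NormedSpace.exp (z • B) * P
          = NormedSpace.exp (z • B) * P * (NormedSpace.exp ((-z) • B) *
            NormedSpace.exp (z • B)) := by rw [hinv, mul_one]
        _ = (NormedSpace.exp (z • B) * P * NormedSpace.exp ((-z) • B)) *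
            NormedSpace.exp (z • B) := by simp only [mul_assoc]
        _ = P * NormedSpace.exp (z • B) := by rw [h0]
    -- differentiate z ↦ exp(z•B)*P - P*exp(z•B) at 0
    have hd : HasDerivAt (fun z : ℂ =>
        NormedSpace.exp (z • B) * P - P * NormedSpace.exp (z • B))
        (NormedSpace.exp ((0 : ℂ) • B) * B * P -
          P * (NormedSpace.exp ((0 : ℂ) • B) * B)) 0 := by
      exact ((hasDerivAt_exp_smul_const B (0 : ℂ)).mul_const P).sub
        ((hasDerivAt_exp_smul_const B (0 : ℂ)).const_mul P)
    have hdz : HasDerivAt (fun z : ℂ =>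
        NormedSpace.exp (z • B) * P - P * NormedSpace.exp (z • B)) 0 0 := by
      have : (fun z : ℂ =>
          NormedSpace.exp (z • B) * P - P * NormedSpace.exp (z • B)) = fun _ => 0 := by
        funext z
        rw [hcomm z, sub_self]
      rw [this]
      exact hasDerivAt_const _ _
    have huniq := hd.unique hdz
    rw [zero_smul, NormedSpace.exp_zero, one_mul, sub_eq_zero] at huniq
    -- B * P = P * B, i.e. (I • A) * P = P * (I • A)
    rw [hB, Matrix.smul_mul, Matrix.mul_smul] at huniq
    have := smul_right_injective (Matrix (Fin n) (Fin n) ℂ) Complex.I_ne_zero huniq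
    exact this
end
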